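/- Let k₂(t,s) := (1/6)·s(1−t)(2t−s²−t²) for s ≤ t and k₂(t,s) := (1/6)·t(1−s)(2s−t²−s²) for s > t, and let L₂ be the compact linear operator on C[0,1] defined by L₂ w(t) := ∫₀¹ k₂(t,s) w(s) ds. Then the spectral radius of L₂ equals 1/π⁴, i.e. the characteristic value μ₂ := 1/r(L₂) equals π⁴. -/

import Mathlib

open Set MeasureTheory
open Real
open scoped ENNReal NNReal

/-- The Green's function of `u'''' = g` on `(0,1)` with
`u(0) = u(1) = u''(0) = u''(1) = 0` (simply supported beam). -/
noncomputable def k2 (t s : ℝ) : ℝ :=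
  if s ≤ t then (1 / 6) * (s * (1 - t) * (2 * t - s ^ 2 - t ^ 2))
  else (1 / 6) * (t * (1 - s) * (2 * s - t ^ 2 - s ^ 2))

noncomputable def antiD (p0 p1 p2 p3 s : ℝ) : ℝ :=
  (-(p0 + p1*s + p2*s^2 + p3*s^3)/π + (2*p2 + 6*p3*s)/π^3) * Real.cos (π*s)
  + ((p1 + 2*p2*s + 3*p3*s^2)/π^2 - 6*p3/π^4) * Real.sin (π*s)

lemma hasDerivAt_antiD (p0 p1 p2 p3 x : ℝ) :
    HasDerivAt (antiD p0 p1 p2 p3)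
      ((p0 + p1*x + p2*x^2 + p3*x^3) * Real.sin (π*x)) x := by
  have hπ : (π : ℝ) ≠ 0 := Real.pi_ne_zero
  have hsin : HasDerivAt (fun s : ℝ => Real.sin (π*s)) (Real.cos (π*x) * π) x := by
    simpa [Function.comp_def] using (Real.hasDerivAt_sin (π*x)).comp x ((hasDerivAt_id x).const_mul π)
  have hcos : HasDerivAt (fun s : ℝ => Real.cos (π*s)) (-Real.sin (π*x) * π) x := by
    simpa [Function.comp_def] using (Real.hasDerivAt_cos (π*x)).comp x ((hasDerivAt_id x).const_mul π)
  have hp : HasDerivAt (fun s : ℝ => p0 + p1*s + p2*s^2 + p3*s^3)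
      (0 + p1*1 + p2*(2*x^1) + p3*(3*x^2)) x := by
    exact (((hasDerivAt_const x p0).add ((hasDerivAt_id x).const_mul p1)).add
      ((hasDerivAt_pow 2 x).const_mul p2 |>.congr_deriv (by push_cast; ring))).add
      ((hasDerivAt_pow 3 x).const_mul p3 |>.congr_deriv (by push_cast; ring))
  have hA : HasDerivAt (fun s : ℝ => -(p0 + p1*s + p2*s^2 + p3*s^3)/π + (2*p2 + 6*p3*s)/π^3)
      (-(0 + p1*1 + p2*(2*x^1) + p3*(3*x^2))/π + (6*p3*1)/π^3) x :=
    (hp.neg.div_const π).add ((((hasDerivAt_id x).const_mul (6*p3)).const_add (2*p2)).div_const _)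
  have hB : HasDerivAt (fun s : ℝ => (p1 + 2*p2*s + 3*p3*s^2)/π^2 - 6*p3/π^4)
      ((0 + 2*p2*1 + 3*p3*(2*x^1))/π^2 - 0) x := by
    refine HasDerivAt.sub ?_ (hasDerivAt_const x _)
    refine HasDerivAt.div_const ?_ _
    exact ((hasDerivAt_const x p1).add ((hasDerivAt_id x).const_mul (2*p2))).add
      ((hasDerivAt_pow 2 x).const_mul (3*p3) |>.congr_deriv (by push_cast; ring))
  have h := (hA.mul hcos).add (hB.mul hsin)
  refine h.congr_deriv ?_
  field_simp
  ring

lemma integral_cubic_sin (p0 p1 p2 p3 u v : ℝ) :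
    ∫ s in u..v, (p0 + p1*s + p2*s^2 + p3*s^3) * Real.sin (π*s)
      = antiD p0 p1 p2 p3 v - antiD p0 p1 p2 p3 u := by
  apply intervalIntegral.integral_eq_sub_of_hasDerivAt
    (fun x _ => hasDerivAt_antiD p0 p1 p2 p3 x)
  apply Continuous.intervalIntegrable
  fun_prop


lemma k2_continuous (t : ℝ) : Continuous (k2 t) := by
  unfold k2
  apply Continuous.if_le (by fun_prop) (by fun_prop) continuous_id continuous_const
  intro s hs; simp only [id] at hs; subst hs; ring

lemma k2_nonneg {t s : ℝ} (ht : t ∈ Icc (0:ℝ) 1) (hs : s ∈ Icc (0:ℝ) 1) : 0 ≤ k2 t s := by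
  obtain ⟨ht0, ht1⟩ := ht; obtain ⟨hs0, hs1⟩ := hs
  unfold k2; split_ifs with h
  · nlinarith [mul_nonneg (mul_nonneg ht0 hs0) (sq_nonneg (1-t)),
      mul_nonneg (mul_nonneg (mul_nonneg hs0 (by linarith : (0:ℝ) ≤ 1 - t))
        (by linarith : (0:ℝ) ≤ t - s)) (by linarith : (0:ℝ) ≤ t + s)]
  · nlinarith [mul_nonneg (mul_nonneg hs0 ht0) (sq_nonneg (1-s)),
      mul_nonneg (mul_nonneg (mul_nonneg ht0 (by linarith : (0:ℝ) ≤ 1 - s))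
        (by linarith : (0:ℝ) ≤ s - t)) (by linarith : (0:ℝ) ≤ s + t)]

lemma k2_le {t s : ℝ} (ht : t ∈ Icc (0:ℝ) 1) (hs : s ∈ Icc (0:ℝ) 1) :
    k2 t s ≤ (1/3) * (t*(1-t)) * (s*(1-s)) := by
  obtain ⟨ht0, ht1⟩ := ht; obtain ⟨hs0, hs1⟩ := hs
  unfold k2; split_ifs with h
  · nlinarith [mul_nonneg (mul_nonneg hs0 (by linarith : (0:ℝ) ≤ 1 - t)) (sq_nonneg (t - s))]
  · nlinarith [mul_nonneg (mul_nonneg ht0 (by linarith : (0:ℝ) ≤ 1 - s)) (sq_nonneg (s - t))]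

lemma sin_lb {x : ℝ} (hx : x ∈ Icc (0:ℝ) 1) : 2 * (x*(1-x)) ≤ Real.sin (π * x) := by
  obtain ⟨hx0, hx1⟩ := hx
  rcases le_or_gt x (1/2) with h | h
  · have := Real.mul_le_sin (x := π * x) (by positivity)
      (by nlinarith [Real.pi_pos])
    have hπ := Real.pi_ne_zero
    calc 2 * (x*(1-x)) ≤ 2 * x := by nlinarith
    _ = 2 / π * (π * x) := by field_simp
    _ ≤ Real.sin (π * x) := this
  · have h1 : π * x = π - π * (1 - x) := by ring
    rw [h1, Real.sin_pi_sub]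
    have := Real.mul_le_sin (x := π * (1-x)) (by nlinarith [Real.pi_pos])
      (by nlinarith [Real.pi_pos])
    have hπ := Real.pi_ne_zero
    calc 2 * (x*(1-x)) ≤ 2 * (1-x) := by nlinarith
    _ = 2 / π * (π * (1-x)) := by field_simp
    _ ≤ Real.sin (π * (1-x)) := this

lemma sin_nonneg01 {x : ℝ} (hx : x ∈ Icc (0:ℝ) 1) : 0 ≤ Real.sin (π * x) :=
  Real.sin_nonneg_of_nonneg_of_le_pi (mul_nonneg Real.pi_pos.le hx.1)
    (mul_le_of_le_one_right Real.pi_pos.le hx.2)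

lemma k2_sin_integral {t : ℝ} (ht : t ∈ Icc (0:ℝ) 1) :
    ∫ s in (0:ℝ)..1, k2 t s * Real.sin (π * s) = Real.sin (π * t) / π ^ 4 := by
  obtain ⟨ht0, ht1⟩ := ht
  have hπ : (π:ℝ) ≠ 0 := Real.pi_ne_zero
  have hcont : Continuous (fun s => k2 t s * Real.sin (π * s)) :=
    (k2_continuous t).mul (by fun_prop)
  have hsplit := intervalIntegral.integral_add_adjacent_intervals
    (a := (0:ℝ)) (b := t) (c := 1) (μ := MeasureTheory.volume)
    (f := fun s => k2 t s * Real.sin (π * s))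
    (hcont.intervalIntegrable _ _) (hcont.intervalIntegrable _ _)
  rw [← hsplit]
  have h1 : ∫ s in (0:ℝ)..t, k2 t s * Real.sin (π * s)
      = ∫ s in (0:ℝ)..t, ((0:ℝ) + ((1-t)*(2*t-t^2)/6)*s + 0*s^2 + (-((1-t)/6))*s^3) * Real.sin (π*s) := by
    apply intervalIntegral.integral_congr
    intro s hs
    rw [Set.uIcc_of_le ht0] at hs
    simp only [k2, if_pos hs.2]
    ring
  have h2 : ∫ s in t..(1:ℝ), k2 t s * Real.sin (π * s)
      = ∫ s in t..(1:ℝ), ((-(t^3/6)) + (t*(2+t^2)/6)*s + (-(t/2))*s^2 + (t/6)*s^3) * Real.sin (π*s) := by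
    apply intervalIntegral.integral_congr
    intro s hs
    rw [Set.uIcc_of_le ht1] at hs
    rcases eq_or_lt_of_le hs.1 with h | h
    · simp only [k2, ← h, if_pos le_rfl]
      ring
    · simp only [k2, if_neg (not_le.2 h)]
      ring
  rw [h1, h2, integral_cubic_sin, integral_cubic_sin]
  unfold antiD
  simp only [mul_zero, mul_one, Real.cos_zero, Real.sin_zero, Real.cos_pi, Real.sin_pi]
  field_simp
  ring

lemma L2_apply_abs_le (L₂ : C(Set.Icc (0:ℝ) 1, ℝ) →L[ℝ] C(Set.Icc (0:ℝ) 1, ℝ))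
    (hL₂ : ∀ (w : C(Set.Icc (0:ℝ) 1, ℝ)) (t : Set.Icc (0:ℝ) 1),
      L₂ w t = ∫ s in (0:ℝ)..1, k2 ↑t s * w (Set.projIcc 0 1 zero_le_one s))
    (v : C(Set.Icc (0:ℝ) 1, ℝ)) (B : ℝ) (hB : 0 ≤ B)
    (hb : ∀ s : Set.Icc (0:ℝ) 1, |v s| ≤ B * Real.sin (π * ↑s))
    (t : Set.Icc (0:ℝ) 1) :
    |(L₂ v) t| ≤ B * (Real.sin (π * ↑t) / π ^ 4) := by
  rw [hL₂]
  have hcont : Continuous fun s : ℝ => k2 ↑t s * v (Set.projIcc 0 1 zero_le_one s) :=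
    (k2_continuous _).mul (v.continuous.comp continuous_projIcc)
  calc |∫ s in (0:ℝ)..1, k2 ↑t s * v (Set.projIcc 0 1 zero_le_one s)|
      ≤ ∫ s in (0:ℝ)..1, |k2 ↑t s * v (Set.projIcc 0 1 zero_le_one s)| :=
        intervalIntegral.abs_integral_le_integral_abs zero_le_one
    _ ≤ ∫ s in (0:ℝ)..1, B * (k2 ↑t s * Real.sin (π * s)) := by
        apply intervalIntegral.integral_mono_on zero_le_one
          (hcont.abs.intervalIntegrable _ _)
          ((continuous_const.mul ((k2_continuous _).mul
            (Real.continuous_sin.comp (continuous_const.mul continuous_id)))).intervalIntegrable _ _)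
        intro s hs
        rw [abs_mul, abs_of_nonneg (k2_nonneg t.2 hs)]
        have h1 : |v (Set.projIcc 0 1 zero_le_one s)| ≤ B * Real.sin (π * s) := by
          rw [Set.projIcc_of_mem zero_le_one hs]
          simpa using hb ⟨s, hs⟩
        calc k2 ↑t s * |v (Set.projIcc 0 1 zero_le_one s)|
            ≤ k2 ↑t s * (B * Real.sin (π * s)) :=
              mul_le_mul_of_nonneg_left h1 (k2_nonneg t.2 hs)
          _ = B * (k2 ↑t s * Real.sin (π * s)) := by ring
    _ = B * ∫ s in (0:ℝ)..1, k2 ↑t s * Real.sin (π * s) :=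
        intervalIntegral.integral_const_mul B _
    _ = B * (Real.sin (π * ↑t) / π ^ 4) := by rw [k2_sin_integral t.2]

lemma L2_pow_bound (L₂ : C(Set.Icc (0:ℝ) 1, ℝ) →L[ℝ] C(Set.Icc (0:ℝ) 1, ℝ))
    (hL₂ : ∀ (w : C(Set.Icc (0:ℝ) 1, ℝ)) (t : Set.Icc (0:ℝ) 1),
      L₂ w t = ∫ s in (0:ℝ)..1, k2 ↑t s * w (Set.projIcc 0 1 zero_le_one s))
    (n : ℕ) (w : C(Set.Icc (0:ℝ) 1, ℝ)) (t : Set.Icc (0:ℝ) 1) :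
    |((L₂ ^ (n+1)) w) t| ≤ (1/12) * (1/π^4)^n * Real.sin (π * ↑t) * ‖w‖ := by
  induction n generalizing t with
  | zero =>
    simp only [zero_add, pow_one, pow_zero, mul_one]
    rw [hL₂]
    have hcont : Continuous fun s : ℝ => k2 ↑t s * w (Set.projIcc 0 1 zero_le_one s) :=
      (k2_continuous _).mul (w.continuous.comp continuous_projIcc)
    calc |∫ s in (0:ℝ)..1, k2 ↑t s * w (Set.projIcc 0 1 zero_le_one s)|
        ≤ ∫ s in (0:ℝ)..1, |k2 ↑t s * w (Set.projIcc 0 1 zero_le_one s)| :=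
          intervalIntegral.abs_integral_le_integral_abs zero_le_one
      _ ≤ ∫ s in (0:ℝ)..1, (1/12) * Real.sin (π * ↑t) * ‖w‖ := by
          apply intervalIntegral.integral_mono_on zero_le_one
            (hcont.abs.intervalIntegrable _ _)
            (intervalIntegrable_const)
          intro s hs
          rw [abs_mul, abs_of_nonneg (k2_nonneg t.2 hs)]
          have h1 : |w (Set.projIcc 0 1 zero_le_one s)| ≤ ‖w‖ := by
            rw [← Real.norm_eq_abs]; exact w.norm_coe_le_norm _
          have h2 : k2 ↑t s ≤ (1/12) * Real.sin (π * ↑t) := by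
            calc k2 ↑t s ≤ (1/3) * (↑t*(1-↑t)) * (s*(1-s)) := k2_le t.2 hs
              _ = (1/12) * (2*(↑t*(1-↑t))) * (2*(s*(1-s))) := by ring
              _ ≤ (1/12) * Real.sin (π * ↑t) * 1 := by
                  apply mul_le_mul
                  · exact mul_le_mul_of_nonneg_left (sin_lb t.2) (by norm_num)
                  · calc 2*(s*(1-s)) ≤ Real.sin (π * s) := sin_lb hs
                      _ ≤ 1 := Real.sin_le_one _
                  · nlinarith [hs.1, hs.2]
                  · have := sin_nonneg01 t.2; positivity
              _ = (1/12) * Real.sin (π * ↑t) := mul_one _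
          calc k2 ↑t s * |w (Set.projIcc 0 1 zero_le_one s)|
              ≤ ((1/12) * Real.sin (π * ↑t)) * ‖w‖ :=
                mul_le_mul h2 h1 (abs_nonneg _)
                  (by have := sin_nonneg01 t.2; positivity)
            _ = (1/12) * Real.sin (π * ↑t) * ‖w‖ := by ring
      _ = (1/12) * Real.sin (π * ↑t) * ‖w‖ := by simp
  | succ n ih =>
    have hpow : (L₂ ^ (n+2)) w = L₂ ((L₂ ^ (n+1)) w) := by
      rw [pow_succ']; rfl
    rw [hpow]
    have hB : (0:ℝ) ≤ (1/12) * (1/π^4)^n * ‖w‖ := by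
      have := Real.pi_pos; positivity
    have := L2_apply_abs_le L₂ hL₂ ((L₂ ^ (n+1)) w) ((1/12) * (1/π^4)^n * ‖w‖) hB
      (fun s => by
        calc |((L₂ ^ (n+1)) w) s|
            ≤ (1/12) * (1/π^4)^n * Real.sin (π * ↑s) * ‖w‖ := ih s
          _ = (1/12) * (1/π^4)^n * ‖w‖ * Real.sin (π * ↑s) := by ring) t
    calc |(L₂ ((L₂ ^ (n+1)) w)) t| ≤ (1/12) * (1/π^4)^n * ‖w‖ * (Real.sin (π * ↑t) / π^4) := this
      _ = (1/12) * (1/π^4)^(n+1) * Real.sin (π * ↑t) * ‖w‖ := by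
          rw [pow_succ]
          have hπ : (π:ℝ) ≠ 0 := Real.pi_ne_zero
          field_simp
          rw [one_div_pow, one_div_pow]; field_simp; ring


set_option maxHeartbeats 1000000 in
set_option synthInstance.maxHeartbeats 400000 in
/-- the linear Hammerstein operator `L₂ w (t) = ∫₀¹ k₂(t,s) w(s) ds`
on `C[0,1]` has spectral radius `1/π⁴`, i.e. the characteristic value
`μ₂ = 1/r(L₂)` equals `π⁴`. -/
theorem stmt_10 (L₂ : C(Set.Icc (0:ℝ) 1, ℝ) →L[ℝ] C(Set.Icc (0:ℝ) 1, ℝ))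
    (hL₂ : ∀ (w : C(Set.Icc (0:ℝ) 1, ℝ)) (t : Set.Icc (0:ℝ) 1),
      L₂ w t = ∫ s in (0:ℝ)..1, k2 ↑t s * w (Set.projIcc 0 1 zero_le_one s)) :
    spectralRadius ℝ L₂ = ENNReal.ofReal (1 / Real.pi ^ 4) := by
  have hπ : (0:ℝ) < π := Real.pi_pos
  have hq : (0:ℝ) < 1/π^4 := by positivity
  set f : C(Set.Icc (0:ℝ) 1, ℝ) := ⟨fun x => Real.sin (π * ↑x), by fun_prop⟩ with hfdef
  have hfeq : L₂ f = (1/π^4) • f := by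
    ext t
    rw [hL₂]
    have h : ∫ s in (0:ℝ)..1, k2 ↑t s * f (Set.projIcc 0 1 zero_le_one s)
        = ∫ s in (0:ℝ)..1, k2 ↑t s * Real.sin (π * s) := by
      apply intervalIntegral.integral_congr
      intro s hs
      rw [Set.uIcc_of_le zero_le_one] at hs
      show k2 (↑t) s * f (Set.projIcc 0 1 zero_le_one s) = k2 (↑t) s * Real.sin (π * s)
      rw [Set.projIcc_of_mem zero_le_one hs]
      rfl
    rw [h, k2_sin_integral t.2]
    simp only [ContinuousMap.smul_apply, hfdef, ContinuousMap.coe_mk, smul_eq_mul]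
    ring
  have hfne : f ≠ 0 := by
    intro h
    have h2 : f ⟨1/2, by norm_num⟩ = 0 := by rw [h]; rfl
    simp only [hfdef, ContinuousMap.coe_mk] at h2
    rw [show π * ((1:ℝ)/2) = π/2 by ring, Real.sin_pi_div_two] at h2
    norm_num at h2
  haveI : Nontrivial C(Set.Icc (0:ℝ) 1, ℝ) := ⟨⟨f, 0, hfne⟩⟩
  have hmem : (1/π^4) ∈ spectrum ℝ L₂ := by
    rw [spectrum.mem_iff]
    intro hunit
    obtain ⟨u, hu⟩ := hunit
    have h0 : (algebraMap ℝ (C(Set.Icc (0:ℝ) 1, ℝ) →L[ℝ] C(Set.Icc (0:ℝ) 1, ℝ)) (1/π^4) - L₂) f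
        = 0 := by
      rw [Algebra.algebraMap_eq_smul_one, ContinuousLinearMap.sub_apply, hfeq]
      simp
    apply hfne
    have h1 := congrArg
      (fun g : C(Set.Icc (0:ℝ) 1, ℝ) →L[ℝ] C(Set.Icc (0:ℝ) 1, ℝ) => g f) u.inv_mul
    simp only [ContinuousLinearMap.mul_apply, ContinuousLinearMap.one_apply] at h1
    rw [hu, h0, map_zero] at h1
    exact h1.symm
  have hlow : ENNReal.ofReal (1/π^4) ≤ spectralRadius ℝ L₂ := by
    rw [← Real.enorm_eq_ofReal hq.le]
    exact le_iSup₂ (f := fun k (_ : k ∈ spectrum ℝ L₂) => (‖k‖₊ : ℝ≥0∞)) _ hmem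
  have hub : ∀ μ ∈ spectrum ℝ L₂, |μ| ≤ 1/π^4 := by
    intro μ hμ
    by_contra hgt
    push_neg at hgt
    have key : ∀ n : ℕ, |μ|^(n+1) ≤ (1/12) * (1/π^4)^n := by
      intro n
      have pow_mem : μ^(n+1) ∈ spectrum ℝ (L₂^(n+1)) := by
        simpa only [one_mul, Algebra.algebraMap_eq_smul_one, one_smul,
          Polynomial.aeval_monomial, Polynomial.eval_monomial]
          using spectrum.subset_polynomial_aeval L₂
            (Polynomial.monomial (n+1) (1:ℝ)) ⟨μ, hμ, rfl⟩
      have hop : ‖L₂^(n+1)‖ ≤ (1/12) * (1/π^4)^n := by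
        apply ContinuousLinearMap.opNorm_le_bound _ (by positivity)
        intro w
        rw [ContinuousMap.norm_le _ (by positivity)]
        intro x
        rw [Real.norm_eq_abs]
        calc |((L₂^(n+1)) w) x|
            ≤ (1/12) * (1/π^4)^n * Real.sin (π * ↑x) * ‖w‖ := L2_pow_bound L₂ hL₂ n w x
          _ ≤ (1/12) * (1/π^4)^n * 1 * ‖w‖ := by
              apply mul_le_mul_of_nonneg_right _ (norm_nonneg w)
              exact mul_le_mul_of_nonneg_left (Real.sin_le_one _) (by positivity)
          _ = (1/12) * (1/π^4)^n * ‖w‖ := by ring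
      have hn' := @spectrum.norm_le_norm_mul_of_mem ℝ
        (C(Set.Icc (0:ℝ) 1, ℝ) →L[ℝ] C(Set.Icc (0:ℝ) 1, ℝ)) _ _ _ _
        (L₂^(n+1)) (μ^(n+1)) pow_mem
      have hone : ‖(1 : C(Set.Icc (0:ℝ) 1, ℝ) →L[ℝ] C(Set.Icc (0:ℝ) 1, ℝ))‖ ≤ 1 :=
        ContinuousLinearMap.norm_id_le
      rw [Real.norm_eq_abs, abs_pow] at hn'
      have habs : |μ|^(n+1) ≤ ‖L₂^(n+1)‖ := by
        nlinarith [norm_nonneg (L₂^(n+1)), pow_nonneg (abs_nonneg μ) (n+1)]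
      exact habs.trans hop
    set r : ℝ := |μ| / (1/π^4) with hr
    have hr1 : 1 < r := (one_lt_div hq).2 hgt
    obtain ⟨n, hn⟩ := pow_unbounded_of_one_lt (1/(12 * (1/π^4))) hr1
    have h2 : r^n ≤ r^(n+1) := pow_le_pow_right₀ hr1.le (Nat.le_succ n)
    have h3 : r^(n+1) ≤ 1/(12*(1/π^4)) := by
      rw [hr, div_pow, div_le_iff₀ (by positivity)]
      calc |μ|^(n+1) ≤ (1/12) * (1/π^4)^n := key n
        _ = 1/(12*(1/π^4)) * ((1/π^4))^(n+1) := by rw [pow_succ]; field_simp; rw [one_div_pow, one_div_pow]; field_simp; ring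
    exact absurd (hn.trans_le (h2.trans h3)) (lt_irrefl _)
  have hup : spectralRadius ℝ L₂ ≤ ENNReal.ofReal (1/π^4) := by
    rw [spectralRadius]
    apply iSup₂_le
    intro k hk
    calc (↑‖k‖₊ : ℝ≥0∞) = ENNReal.ofReal ‖k‖ := (ofReal_norm k).symm
      _ ≤ ENNReal.ofReal (1/π^4) := by
          apply ENNReal.ofReal_le_ofReal
          rw [Real.norm_eq_abs]
          exact hub k hk
  exact le_antisymm hup hlow
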